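/- Let A_1 and A_2 be positive definite real symmetric n×n matrices. Then for every real symmetric n×n matrix B one has tr(B A_1^{1/2} B A_1^{1/2}) + tr(B A_2^{1/2} B A_2^{1/2}) ≤ tr(B (A_1 + A_2)^{1/2} B (A_1 + A_2)^{1/2}). Equivalently, P(A_1^{1/2}) + P(A_2^{1/2}) ⪯ P((A_1+A_2)^{1/2}) as linear operators on symmetric matrices. (Lemma 2 of the paper, specialized to the positive semidefinite cone.) -/

import Mathlib

open Matrix BigOperators

/- `msqrt A` is the positive semidefinite square root of `A` (junk value `0` when `A` is
not positive semidefinite). -/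
open Classical in
noncomputable def msqrt {n : ℕ} (A : Matrix (Fin n) (Fin n) ℝ) : Matrix (Fin n) (Fin n) ℝ :=
  if h : A.PosSemidef then
    h.1.eigenvectorUnitary.1 * diagonal ((RCLike.ofReal (K := ℝ)) ∘ Real.sqrt ∘ h.1.eigenvalues) *
      (star h.1.eigenvectorUnitary : Matrix (Fin n) (Fin n) ℝ) else 0

/- The matrix geometric mean `X # Y = X^{1/2} (X^{-1/2} Y X^{-1/2})^{1/2} X^{1/2}`. -/
noncomputable def gmean {n : ℕ} (X Y : Matrix (Fin n) (Fin n) ℝ) : Matrix (Fin n) (Fin n) ℝ :=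
  msqrt X * msqrt (msqrt X⁻¹ * Y * msqrt X⁻¹) * msqrt X

namespace Matrix.PosSemidef
variable {m : Type*} [Fintype m] [DecidableEq m]
noncomputable def sqrt {A : Matrix m m ℝ} (hA : A.PosSemidef) : Matrix m m ℝ :=
  hA.1.eigenvectorUnitary.1 * diagonal ((RCLike.ofReal (K := ℝ)) ∘ Real.sqrt ∘ hA.1.eigenvalues) *
      (star hA.1.eigenvectorUnitary : Matrix m m ℝ)
lemma posSemidef_sqrt {A : Matrix m m ℝ} (hA : A.PosSemidef) : hA.sqrt.PosSemidef := by
  have hd : (diagonal ((RCLike.ofReal (K := ℝ)) ∘ Real.sqrt ∘ hA.1.eigenvalues)).PosSemidef :=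
    PosSemidef.diagonal (fun i => by simp [Real.sqrt_nonneg])
  exact hd.mul_mul_conjTranspose_same _
lemma sqrt_mul_self {A : Matrix m m ℝ} (hA : A.PosSemidef) : hA.sqrt * hA.sqrt = A := by
  have hu : (star hA.1.eigenvectorUnitary : Matrix m m ℝ) * hA.1.eigenvectorUnitary.1 = 1 :=
    Unitary.star_mul_self_of_mem hA.1.eigenvectorUnitary.2
  conv_rhs => rw [hA.1.spectral_theorem]
  simp only [sqrt, Unitary.conjStarAlgAut_apply]
  rw [show ∀ a b c d e f : Matrix m m ℝ, a * b * c * (d * e * f) = a * (b * (c * d) * e) * f by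
    intros; simp only [Matrix.mul_assoc], hu, Matrix.mul_one, diagonal_mul_diagonal]
  congr 3
  funext i
  simp [← Real.sqrt_mul (hA.eigenvalues_nonneg i), Real.sqrt_mul_self (hA.eigenvalues_nonneg i)]
end Matrix.PosSemidef

open Kronecker

set_option linter.unusedSectionVars false

section Aux

variable {m : Type*} [Fintype m] [DecidableEq m]


-- sqrt of a PosDef matrix is PosDef
lemma sqrt_posDef {A : Matrix m m ℝ} (hA : A.PosDef) : hA.posSemidef.sqrt.PosDef := by
  set S := hA.posSemidef.sqrt with hS
  refine Matrix.PosDef.of_dotProduct_mulVec_pos hA.posSemidef.posSemidef_sqrt.1 fun x hx => ?_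
  rcases lt_or_eq_of_le (hA.posSemidef.posSemidef_sqrt.dotProduct_mulVec_nonneg x) with h | h
  · exact h
  · exfalso
    have h0 : S *ᵥ x = 0 := by
      rw [← hA.posSemidef.posSemidef_sqrt.dotProduct_mulVec_zero_iff x]
      exact h.symm
    have : A *ᵥ x = 0 := by
      rw [← hA.posSemidef.sqrt_mul_self, ← Matrix.mulVec_mulVec, h0, Matrix.mulVec_zero]
    have h2 := hA.dotProduct_mulVec_pos hx
    rw [this, dotProduct_zero] at h2
    exact lt_irrefl 0 h2

-- transpose facts over ℝ
example (M : Matrix m m ℝ) (h : M.IsHermitian) : Mᵀ = M := h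

lemma eig_le_one {Y K : Matrix m m ℝ} (hY : Y.IsHermitian) (hK : K.PosDef)
    (h : (K - Y * K * Y).PosSemidef) : ((1 : Matrix m m ℝ) - Y).PosSemidef := by
  have hW : ((1 : Matrix m m ℝ) - Y).IsHermitian := Matrix.isHermitian_one.sub hY
  refine hW.posSemidef_iff_eigenvalues_nonneg.mpr fun i => ?_
  set ν := hW.eigenvalues i with hν
  set x : m → ℝ := ⇑(hW.eigenvectorBasis i) with hx
  have hxe : ((1 : Matrix m m ℝ) - Y) *ᵥ x = ν • x := hW.mulVec_eigenvectorBasis i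
  have hx0 : x ≠ 0 := by
    have := hW.eigenvectorBasis.orthonormal.ne_zero i
    intro hc
    apply this
    ext j
    exact congrFun hc j
  have hYt : Yᵀ = Y := hY
  have hYx : Y *ᵥ x = (1 - ν) • x := by
    have h1 : (1 : Matrix m m ℝ) *ᵥ x - Y *ᵥ x = ν • x := by
      rw [← Matrix.sub_mulVec]; exact hxe
    have h2 : Y *ᵥ x = x - ν • x := by
      rw [Matrix.one_mulVec] at h1
      linear_combination (norm := module) -h1
    rw [h2, sub_smul, one_smul]
  have hq : 0 < x ⬝ᵥ K *ᵥ x := by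
    have := hK.dotProduct_mulVec_pos hx0
    simpa using this
  have hz : ∀ z, x ⬝ᵥ Y *ᵥ z = (1 - ν) * (x ⬝ᵥ z) := by
    intro z
    rw [Matrix.dotProduct_mulVec, ← Matrix.mulVec_transpose, hYt, hYx]
    simp [smul_dotProduct, smul_eq_mul]
  have key : x ⬝ᵥ (Y * K * Y) *ᵥ x = (1 - ν) ^ 2 * (x ⬝ᵥ K *ᵥ x) := by
    rw [← Matrix.mulVec_mulVec, ← Matrix.mulVec_mulVec, hz, hYx, Matrix.mulVec_smul,
      dotProduct_smul]
    simp only [smul_eq_mul]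
    ring
  have h0 : 0 ≤ x ⬝ᵥ (K - Y * K * Y) *ᵥ x := by simpa using h.dotProduct_mulVec_nonneg x
  rw [Matrix.sub_mulVec, dotProduct_sub, key] at h0
  by_contra hc
  push_neg at hc
  nlinarith [hq, mul_pos (neg_pos.mpr hc) hq, mul_nonneg (mul_self_nonneg ν) hq.le]

open Kronecker in
lemma one_kronecker_posDef {l : Type*} [Fintype l] [DecidableEq l] {M : Matrix m m ℝ}
    (hM : M.PosDef) : ((1 : Matrix l l ℝ) ⊗ₖ M).PosDef := by
  have hMt : Mᵀ = M := hM.isHermitian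
  refine Matrix.PosDef.of_dotProduct_mulVec_pos ?_ ?_
  · show _ = _
    ext ⟨a, b⟩ ⟨c, d⟩
    simp only [Matrix.conjTranspose_apply, Matrix.kroneckerMap_apply, Matrix.one_apply,
      star_trivial]
    rw [← hMt]
    by_cases hac : a = c <;> simp [hac, eq_comm, Matrix.transpose_apply]
    exact (congrFun (congrFun hMt b) d).symm
  · intro x hx
    have key : star x ⬝ᵥ ((1 : Matrix l l ℝ) ⊗ₖ M) *ᵥ x
        = ∑ i : l, (fun j => x (i, j)) ⬝ᵥ M *ᵥ (fun j => x (i, j)) := by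
      simp only [star_trivial, dotProduct, Matrix.mulVec, Matrix.kroneckerMap_apply,
        Matrix.one_apply, Fintype.sum_prod_type, ite_mul, one_mul, zero_mul]
      congr 1
      ext i
      congr 1
      ext x1
      congr 1
      rw [Finset.sum_comm]
      simp [Finset.sum_ite_eq]
    rw [key]
    obtain ⟨⟨i0, j0⟩, hij⟩ := Function.ne_iff.mp hx
    have hslice : (fun j => x (i0, j)) ≠ 0 := fun hc => hij (congrFun hc j0)
    refine Finset.sum_pos' (fun i _ => ?_) ⟨i0, Finset.mem_univ i0, ?_⟩
    · have := hM.posSemidef.dotProduct_mulVec_nonneg (fun j => x (i, j))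
      simpa using this
    · have := hM.dotProduct_mulVec_pos hslice
      simpa using this

open Kronecker in
lemma vec_quad (M B : Matrix m m ℝ) (hMt : Mᵀ = M) (hBt : Bᵀ = B) :
    (fun p : m × m => B p.1 p.2) ⬝ᵥ ((M ⊗ₖ M) *ᵥ fun p : m × m => B p.1 p.2)
      = Matrix.trace (B * M * B * M) := by
  simp only [Matrix.trace, Matrix.diag, Matrix.mul_apply, dotProduct, Matrix.mulVec,
    Matrix.kroneckerMap_apply, Fintype.sum_prod_type, Finset.sum_mul, Finset.mul_sum]
  have hB : ∀ p q, B p q = B q p := fun p q => (congrFun (congrFun hBt p) q).symm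
  have hM : ∀ p q, M p q = M q p := fun p q => (congrFun (congrFun hMt p) q).symm
  have e1 : ∑ p : (m × m) × (m × m),
      B p.1.1 p.1.2 * (M p.1.1 p.2.1 * M p.1.2 p.2.2 * B p.2.1 p.2.2)
      = ∑ x : m, ∑ x1 : m, ∑ x2 : m, ∑ x3 : m, B x x1 * (M x x2 * M x1 x3 * B x2 x3) := by
    simp only [Fintype.sum_prod_type]
  have e2 : ∑ q : (m × m) × (m × m),
      B q.1.1 q.2.2 * M q.2.2 q.2.1 * B q.2.1 q.1.2 * M q.1.2 q.1.1
      = ∑ x : m, ∑ x1 : m, ∑ x2 : m, ∑ i : m, B x i * M i x2 * B x2 x1 * M x1 x := by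
    simp only [Fintype.sum_prod_type]
  rw [← e1, ← e2]
  refine Fintype.sum_equiv ⟨fun p => ((p.1.2, p.2.2), (p.2.1, p.1.1)),
    fun q => ((q.2.2, q.1.1), (q.2.1, q.1.2)), fun p => rfl, fun q => rfl⟩ _ _ ?_
  rintro ⟨⟨a, b⟩, c, d⟩
  simp only [Equiv.coe_fn_mk]
  rw [hB b a, hM d b]
  ring


lemma symm_dot {ι : Type*} [Fintype ι] (P : Matrix ι ι ℝ) (hP : Pᵀ = P) (u v : ι → ℝ) :
    (P *ᵥ u) ⬝ᵥ v = u ⬝ᵥ (P *ᵥ v) := by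
  conv_rhs => rw [Matrix.dotProduct_mulVec, ← Matrix.mulVec_transpose, hP]

lemma posDef_mul_self {S : Matrix m m ℝ} (hS : S.PosDef) : (S * S).PosDef := by
  have hSt : Sᵀ = S := hS.isHermitian
  have hdet : IsUnit S.det := (Matrix.isUnit_iff_isUnit_det S).mp hS.isUnit
  refine Matrix.PosDef.of_dotProduct_mulVec_pos ?_ fun x hx => ?_
  · show _ = _
    rw [Matrix.conjTranspose_mul, hS.isHermitian]
  · have hz : S *ᵥ x ≠ 0 := by
      intro hc
      apply hx
      have h2 : S⁻¹ *ᵥ (S *ᵥ x) = 0 := by rw [hc, Matrix.mulVec_zero]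
      rwa [Matrix.mulVec_mulVec, Matrix.nonsing_inv_mul S hdet, Matrix.one_mulVec] at h2
    have key : star x ⬝ᵥ (S * S) *ᵥ x = (S *ᵥ x) ⬝ᵥ (S *ᵥ x) := by
      simp only [star_trivial]
      rw [← Matrix.mulVec_mulVec, symm_dot S hSt]
    rw [key]
    rcases lt_or_eq_of_le (Finset.sum_nonneg fun i _ => mul_self_nonneg ((S *ᵥ x) i)) with h | h
    · exact h
    · exact absurd (dotProduct_self_eq_zero.mp h.symm) hz

open Kronecker in
lemma kron_key {S₁ S₂ S T : Matrix m m ℝ}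
    (h1t : S₁ᵀ = S₁) (h2t : S₂ᵀ = S₂)
    (hTS : T * T = S) (hsum : S₁ * S₁ + S₂ * S₂ = S * S)
    (hSpd : S.PosDef) (hTpd : T.PosDef) :
    ((S ⊗ₖ S) - (S₁ ⊗ₖ S₁ + S₂ ⊗ₖ S₂)).PosSemidef := by
  have hTt : Tᵀ = T := hTpd.isHermitian
  have hSt : Sᵀ = S := hSpd.isHermitian
  have hSS : (S * S).PosDef := posDef_mul_self hSpd
  have hSSt : (S * S)ᵀ = S * S := hSS.isHermitian
  have hdetS : IsUnit S.det := (Matrix.isUnit_iff_isUnit_det S).mp hSpd.isUnit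
  have hdetT : IsUnit T.det := (Matrix.isUnit_iff_isUnit_det T).mp hTpd.isUnit
  have hdetSS : IsUnit (S * S).det := (Matrix.isUnit_iff_isUnit_det _).mp hSS.isUnit
  have hTi : T * T⁻¹ = 1 := Matrix.mul_nonsing_inv T hdetT
  have hiT : T⁻¹ * T = 1 := Matrix.nonsing_inv_mul T hdetT
  have hSi : S * S⁻¹ = 1 := Matrix.mul_nonsing_inv S hdetS
  have hiS : S⁻¹ * S = 1 := Matrix.nonsing_inv_mul S hdetS
  have hTit : (T⁻¹)ᵀ = T⁻¹ := by rw [Matrix.transpose_nonsing_inv, hTt]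
  have hiTT : T⁻¹ * T⁻¹ = S⁻¹ := by rw [← hTS, Matrix.mul_inv_rev]
  have kt : ∀ (A B : Matrix m m ℝ), (A ⊗ₖ B)ᵀ = Aᵀ ⊗ₖ Bᵀ :=
    fun A B => (Matrix.kroneckerMap_transpose _ _ _).symm
  set X := S₁ ⊗ₖ S₁ + S₂ ⊗ₖ S₂ with hX
  set Ci := (S * S)⁻¹ ⊗ₖ (1 : Matrix m m ℝ) with hCi
  set D := (1 : Matrix m m ℝ) ⊗ₖ (S * S) with hD
  set N := T⁻¹ ⊗ₖ T⁻¹ with hN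
  have hXt : Xᵀ = X := by rw [hX, Matrix.transpose_add, kt, kt, h1t, h2t]
  have hNt : Nᵀ = N := by rw [hN, kt, hTit]
  have hCit : Ciᵀ = Ci := by
    rw [hCi, kt, Matrix.transpose_one, Matrix.transpose_nonsing_inv, hSSt]
  have hDt : Dᵀ = D := by
    rw [hD, kt, Matrix.transpose_one, hSSt]
  -- Step A
  have stepA : ∀ u w : m × m → ℝ,
      0 ≤ u ⬝ᵥ (((S * S) ⊗ₖ (1 : Matrix m m ℝ)) *ᵥ u) + 2 * (u ⬝ᵥ (X *ᵥ w))
        + w ⬝ᵥ (D *ᵥ w) := by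
    have single : ∀ (R : Matrix m m ℝ), Rᵀ = R → ∀ u w : m × m → ℝ,
        0 ≤ u ⬝ᵥ (((R * R) ⊗ₖ (1 : Matrix m m ℝ)) *ᵥ u) + 2 * (u ⬝ᵥ ((R ⊗ₖ R) *ᵥ w))
          + w ⬝ᵥ (((1 : Matrix m m ℝ) ⊗ₖ (R * R)) *ᵥ w) := by
      intro R hRt u w
      set P := R ⊗ₖ (1 : Matrix m m ℝ) with hP
      set Q := (1 : Matrix m m ℝ) ⊗ₖ R with hQ
      have hPt : Pᵀ = P := by rw [hP, kt, hRt, Matrix.transpose_one]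
      have hQt : Qᵀ = Q := by rw [hQ, kt, hRt, Matrix.transpose_one]
      have hPP : P * P = (R * R) ⊗ₖ (1 : Matrix m m ℝ) := by
        rw [hP, ← Matrix.mul_kronecker_mul, Matrix.mul_one]
      have hQQ : Q * Q = (1 : Matrix m m ℝ) ⊗ₖ (R * R) := by
        rw [hQ, ← Matrix.mul_kronecker_mul, Matrix.mul_one]
      have hPQ : P * Q = R ⊗ₖ R := by
        rw [hP, hQ, ← Matrix.mul_kronecker_mul, Matrix.mul_one, Matrix.one_mul]
      have h0 : 0 ≤ (P *ᵥ u + Q *ᵥ w) ⬝ᵥ (P *ᵥ u + Q *ᵥ w) :=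
        Finset.sum_nonneg fun i _ => mul_self_nonneg _
      have e1 : (P *ᵥ u) ⬝ᵥ (P *ᵥ u) = u ⬝ᵥ ((P * P) *ᵥ u) := by
        rw [symm_dot P hPt, Matrix.mulVec_mulVec]
      have e2 : (P *ᵥ u) ⬝ᵥ (Q *ᵥ w) = u ⬝ᵥ ((P * Q) *ᵥ w) := by
        rw [symm_dot P hPt, Matrix.mulVec_mulVec]
      have e3 : (Q *ᵥ w) ⬝ᵥ (P *ᵥ u) = u ⬝ᵥ ((P * Q) *ᵥ w) := by
        rw [dotProduct_comm]; exact e2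
      have e4 : (Q *ᵥ w) ⬝ᵥ (Q *ᵥ w) = w ⬝ᵥ ((Q * Q) *ᵥ w) := by
        rw [symm_dot Q hQt, Matrix.mulVec_mulVec]
      have hexp : (P *ᵥ u + Q *ᵥ w) ⬝ᵥ (P *ᵥ u + Q *ᵥ w)
          = u ⬝ᵥ ((P * P) *ᵥ u) + 2 * (u ⬝ᵥ ((P * Q) *ᵥ w)) + w ⬝ᵥ ((Q * Q) *ᵥ w) := by
        rw [add_dotProduct, dotProduct_add, dotProduct_add, e1, e2, e3, e4]
        ring
      rw [← hPP, ← hPQ, ← hQQ, ← hexp]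
      exact h0
    intro u w
    have g1 := single S₁ h1t u w
    have g2 := single S₂ h2t u w
    have hCd : (S * S) ⊗ₖ (1 : Matrix m m ℝ)
        = (S₁ * S₁) ⊗ₖ (1 : Matrix m m ℝ) + (S₂ * S₂) ⊗ₖ (1 : Matrix m m ℝ) := by
      rw [← hsum, Matrix.add_kronecker]
    have hDd : D = (1 : Matrix m m ℝ) ⊗ₖ (S₁ * S₁) + (1 : Matrix m m ℝ) ⊗ₖ (S₂ * S₂) := by
      rw [hD, ← hsum, Matrix.kronecker_add]
    rw [hCd, hDd, hX, Matrix.add_mulVec, dotProduct_add, Matrix.add_mulVec,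
      dotProduct_add, Matrix.add_mulVec, dotProduct_add]
    linarith [g1, g2]
  have hCCi : ((S * S) ⊗ₖ (1 : Matrix m m ℝ)) * Ci = 1 := by
    rw [hCi, ← Matrix.mul_kronecker_mul, Matrix.mul_nonsing_inv _ hdetSS, Matrix.mul_one,
      Matrix.one_kronecker_one]
  -- Step B
  have stepB : (D - X * Ci * X).PosSemidef := by
    refine Matrix.PosSemidef.of_dotProduct_mulVec_nonneg ?_ ?_
    · show _ = _
      calc (D - X * Ci * X)ᵀ = Dᵀ - (X * Ci * X)ᵀ := Matrix.transpose_sub _ _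
        _ = D - X * Ci * X := by
          rw [hDt, Matrix.transpose_mul, Matrix.transpose_mul, hXt, hCit, Matrix.mul_assoc]
    · intro w
      simp only [star_trivial]
      have key := stepA (-(Ci *ᵥ (X *ᵥ w))) w
      have t1 : (((S * S) ⊗ₖ (1 : Matrix m m ℝ)) *ᵥ (-(Ci *ᵥ (X *ᵥ w)))) = -(X *ᵥ w) := by
        rw [Matrix.mulVec_neg, Matrix.mulVec_mulVec, hCCi, Matrix.one_mulVec]
      have t2 : (-(Ci *ᵥ (X *ᵥ w))) ⬝ᵥ (-(X *ᵥ w)) = (Ci *ᵥ (X *ᵥ w)) ⬝ᵥ (X *ᵥ w) := by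
        rw [neg_dotProduct, dotProduct_neg, neg_neg]
      have t3 : (-(Ci *ᵥ (X *ᵥ w))) ⬝ᵥ (X *ᵥ w) = -((Ci *ᵥ (X *ᵥ w)) ⬝ᵥ (X *ᵥ w)) :=
        neg_dotProduct _ _
      rw [t1, t2, t3] at key
      have hw : w ⬝ᵥ ((X * Ci * X) *ᵥ w) = (Ci *ᵥ (X *ᵥ w)) ⬝ᵥ (X *ᵥ w) := by
        rw [← Matrix.mulVec_mulVec, ← Matrix.mulVec_mulVec, ← symm_dot X hXt,
          dotProduct_comm]
      rw [Matrix.sub_mulVec, dotProduct_sub, hw]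
      linarith [key]
  -- Step C
  have hNN : N * N = S⁻¹ ⊗ₖ S⁻¹ := by rw [hN, ← Matrix.mul_kronecker_mul, hiTT]
  have hmid : N * N * D * (N * N) = Ci := by
    simp only [hNN, hD, hCi, ← Matrix.mul_kronecker_mul, Matrix.mul_one, Matrix.one_mul]
    rw [Matrix.mul_inv_rev, ← Matrix.mul_assoc S⁻¹ S S, hiS, Matrix.one_mul, hSi]
  set Y := N * X * N with hY
  set K := N * D * N with hK
  have hYt : Yᵀ = Y := by
    rw [hY, Matrix.transpose_mul, Matrix.transpose_mul, hNt, hXt, Matrix.mul_assoc]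
  have hKt : Kᵀ = K := by
    rw [hK, Matrix.transpose_mul, Matrix.transpose_mul, hNt, hDt, Matrix.mul_assoc]
  have hKsub : K - Y * K * Y = N * (D - X * Ci * X) * N := by
    rw [hY, hK, ← hmid]
    noncomm_ring
  have hTTN : (T ⊗ₖ T) * N = 1 := by
    rw [hN, ← Matrix.mul_kronecker_mul, hTi, Matrix.one_kronecker_one]
  have hNTT : N * (T ⊗ₖ T) = 1 := by
    rw [hN, ← Matrix.mul_kronecker_mul, hiT, Matrix.one_kronecker_one]
  have hKpd : K.PosDef := by
    refine Matrix.PosDef.of_dotProduct_mulVec_pos hKt fun x hx => ?_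
    have hNx : N *ᵥ x ≠ 0 := by
      intro hc
      apply hx
      have h2 : (T ⊗ₖ T) *ᵥ (N *ᵥ x) = 0 := by rw [hc, Matrix.mulVec_zero]
      rwa [Matrix.mulVec_mulVec, hTTN, Matrix.one_mulVec] at h2
    have hDpd : ((1 : Matrix m m ℝ) ⊗ₖ (S * S)).PosDef := one_kronecker_posDef hSS
    have key : star x ⬝ᵥ K *ᵥ x = (N *ᵥ x) ⬝ᵥ (D *ᵥ (N *ᵥ x)) := by
      simp only [star_trivial]
      rw [hK, ← Matrix.mulVec_mulVec, ← Matrix.mulVec_mulVec, ← symm_dot N hNt]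
    rw [key]
    have := hDpd.dotProduct_mulVec_pos hNx
    rw [hD]
    simpa using this
  have h1Y : ((1 : Matrix (m × m) (m × m) ℝ) - Y).PosSemidef := by
    apply eig_le_one (show Y.IsHermitian from hYt) hKpd
    rw [hKsub]
    have h2 := stepB.mul_mul_conjTranspose_same N
    rwa [(show Nᴴ = N from hNt)] at h2
  have hTTk : (T ⊗ₖ T) * (T ⊗ₖ T) = S ⊗ₖ S := by rw [← Matrix.mul_kronecker_mul, hTS]
  have hfin : (T ⊗ₖ T) * ((1 : Matrix (m × m) (m × m) ℝ) - Y) * (T ⊗ₖ T) = S ⊗ₖ S - X := by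
    rw [Matrix.mul_sub, Matrix.sub_mul, mul_one, hTTk, hY]
    congr 1
    calc (T ⊗ₖ T) * (N * X * N) * (T ⊗ₖ T)
        = ((T ⊗ₖ T) * N) * X * (N * (T ⊗ₖ T)) := by noncomm_ring
      _ = X := by rw [hTTN, hNTT, one_mul, mul_one]
  rw [← hfin]
  have h3 := h1Y.mul_mul_conjTranspose_same (T ⊗ₖ T)
  rwa [(show (T ⊗ₖ T)ᴴ = T ⊗ₖ T from by rw [(show (T ⊗ₖ T)ᴴ = (T ⊗ₖ T)ᵀ from rfl), kt, hTt])] at h3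

end Aux

theorem stmt2 {n : ℕ} (A₁ A₂ : Matrix (Fin n) (Fin n) ℝ)
    (hA₁ : A₁.PosDef) (hA₂ : A₂.PosDef) :
    ∀ B : Matrix (Fin n) (Fin n) ℝ, B.IsHermitian →
      Matrix.trace (B * msqrt A₁ * B * msqrt A₁) + Matrix.trace (B * msqrt A₂ * B * msqrt A₂)
        ≤ Matrix.trace (B * msqrt (A₁ + A₂) * B * msqrt (A₁ + A₂)) := by
  intro B hB
  have hA : (A₁ + A₂).PosDef := hA₁.add hA₂
  have hp1 := hA₁.posSemidef
  have hp2 := hA₂.posSemidef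
  have hp := hA.posSemidef
  have m1 : msqrt A₁ = hp1.sqrt := by simp only [msqrt]; rw [dif_pos hp1]; rfl
  have m2 : msqrt A₂ = hp2.sqrt := by simp only [msqrt]; rw [dif_pos hp2]; rfl
  have m3 : msqrt (A₁ + A₂) = hp.sqrt := by simp only [msqrt]; rw [dif_pos hp]; rfl
  set S₁ := hp1.sqrt with hS1
  set S₂ := hp2.sqrt with hS2
  set S := hp.sqrt with hS
  have hSpd : S.PosDef := sqrt_posDef hA
  set T := hSpd.posSemidef.sqrt with hT
  have hTpd : T.PosDef := sqrt_posDef hSpd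
  have hTS : T * T = S := hSpd.posSemidef.sqrt_mul_self
  have h1t : S₁ᵀ = S₁ := hp1.posSemidef_sqrt.1
  have h2t : S₂ᵀ = S₂ := hp2.posSemidef_sqrt.1
  have hSt : Sᵀ = S := hp.posSemidef_sqrt.1
  have hsum : S₁ * S₁ + S₂ * S₂ = S * S := by
    rw [hp1.sqrt_mul_self, hp2.sqrt_mul_self, hp.sqrt_mul_self]
  have key := kron_key h1t h2t hTS hsum hSpd hTpd
  set v : Fin n × Fin n → ℝ := fun p => B p.1 p.2 with hv
  have hBt : Bᵀ = B := hB
  have h0 : 0 ≤ v ⬝ᵥ ((S ⊗ₖ S - (S₁ ⊗ₖ S₁ + S₂ ⊗ₖ S₂)) *ᵥ v) := by simpa using key.dotProduct_mulVec_nonneg v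
  rw [Matrix.sub_mulVec, dotProduct_sub, Matrix.add_mulVec, dotProduct_add,
    vec_quad S B hSt hBt, vec_quad S₁ B h1t hBt, vec_quad S₂ B h2t hBt] at h0
  rw [m1, m2, m3]
  linarith
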